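/- Let T₁ and T₂ be two homothetic closed triangles in a plane (T₂ = λT₁ + t for some λ > 0 and translation t), with open interiors A₁ and A₂. If A₁ ∩ A₂ ≠ ∅, A₁ \ A₂ ≠ ∅, and A₂ \ A₁ ≠ ∅ (i.e., they are crossing), then some vertex of T₁ lies in T₂ or some vertex of T₂ lies in T₁. -/
import Mathlib

/-- Lemma 2.4: if two homothetic closed triangles in the plane are crossing
(their open interiors intersect and neither interior contains the other), then
a vertex of one triangle lies in the other triangle. -/
theorem crossing_homothetic_triangles_vertex_mem
    (a b c : EuclideanSpace ℝ (Fin 2)) (haff : AffineIndependent ℝ ![a, b, c])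
    (lam : ℝ) (hlam : 0 < lam) (t : EuclideanSpace ℝ (Fin 2))
    (T₁ T₂ : Set (EuclideanSpace ℝ (Fin 2)))
    (hT₁ : T₁ = convexHull ℝ {a, b, c})
    (hT₂ : T₂ = convexHull ℝ {lam • a + t, lam • b + t, lam • c + t})
    (hcross₁ : (interior T₁ ∩ interior T₂).Nonempty)
    (hcross₂ : (interior T₁ \ interior T₂).Nonempty)
    (hcross₃ : (interior T₂ \ interior T₁).Nonempty) :
    (a ∈ T₂ ∨ b ∈ T₂ ∨ c ∈ T₂) ∨
      (lam • a + t ∈ T₁ ∨ lam • b + t ∈ T₁ ∨ lam • c + t ∈ T₁) := by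
  classical
  have hcard : Fintype.card (Fin 3) = Module.finrank ℝ (EuclideanSpace ℝ (Fin 2)) + 1 := by
    simp [finrank_euclideanSpace_fin]
  -- the affine map x ↦ lam • x + t
  let f : EuclideanSpace ℝ (Fin 2) →ᵃ[ℝ] EuclideanSpace ℝ (Fin 2) :=
    { toFun := fun x => lam • x + t
      linear := lam • LinearMap.id
      map_vadd' := by
        intro p v
        simp [smul_add]
        abel }
  have hfinj : Function.Injective f := by
    intro x y h
    have h' : lam • x = lam • y := by
      have : lam • x + t = lam • y + t := h
      simpa using this
    exact smul_right_injective _ hlam.ne' h'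
  have haffq : AffineIndependent ℝ ![lam • a + t, lam • b + t, lam • c + t] := by
    have h := haff.map' f hfinj
    have : ⇑f ∘ ![a, b, c] = ![lam • a + t, lam • b + t, lam • c + t] := by
      funext j
      fin_cases j <;> rfl
    rwa [this] at h
  let b₁ : AffineBasis (Fin 3) ℝ (EuclideanSpace ℝ (Fin 2)) :=
    ⟨![a, b, c], haff, haff.affineSpan_eq_top_iff_card_eq_finrank_add_one.mpr hcard⟩
  let b₂ : AffineBasis (Fin 3) ℝ (EuclideanSpace ℝ (Fin 2)) :=
    ⟨![lam • a + t, lam • b + t, lam • c + t], haffq,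
      haffq.affineSpan_eq_top_iff_card_eq_finrank_add_one.mpr hcard⟩
  have hb₁ : ∀ j, b₁ j = ![a, b, c] j := fun _ => rfl
  have hb₂ : ∀ j, b₂ j = ![lam • a + t, lam • b + t, lam • c + t] j := fun _ => rfl
  have hrange₁ : Set.range ⇑b₁ = {a, b, c} := by
    ext x
    constructor
    · rintro ⟨j, rfl⟩
      fin_cases j <;> simp [hb₁]
    · rintro (rfl | rfl | rfl)
      exacts [⟨0, rfl⟩, ⟨1, rfl⟩, ⟨2, rfl⟩]
  have hrange₂ : Set.range ⇑b₂ = {lam • a + t, lam • b + t, lam • c + t} := by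
    ext x
    constructor
    · rintro ⟨j, rfl⟩
      fin_cases j <;> simp [hb₂]
    · rintro (rfl | rfl | rfl)
      exacts [⟨0, rfl⟩, ⟨1, rfl⟩, ⟨2, rfl⟩]
  have hmem₁ : T₁ = {x | ∀ i, 0 ≤ b₁.coord i x} := by
    rw [hT₁, ← hrange₁, b₁.convexHull_eq_nonneg_coord]
  have hmem₂ : T₂ = {x | ∀ i, 0 ≤ b₂.coord i x} := by
    rw [hT₂, ← hrange₂, b₂.convexHull_eq_nonneg_coord]
  have hint₁ : interior T₁ = {x | ∀ i, 0 < b₁.coord i x} := by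
    rw [hT₁, ← hrange₁, b₁.interior_convexHull]
  have hint₂ : interior T₂ = {x | ∀ i, 0 < b₂.coord i x} := by
    rw [hT₂, ← hrange₂, b₂.interior_convexHull]
  -- relation between the two sets of vertices
  have hqp : ∀ j, b₂ j = lam • b₁ j + t := by
    intro j
    fin_cases j <;> rfl
  -- the "translation" barycentric constants
  set cc : Fin 3 → ℝ := fun i => b₁.coord i (b₂ i) - lam with hcc
  have hval : ∀ i j, b₁.coord i (b₂ j) = lam * (if i = j then 1 else 0) + cc i := by
    intro i j
    rcases eq_or_ne i j with rfl | hij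
    · simp [hcc]
    · have hsub : b₂ j -ᵥ b₂ i = lam • (b₁ j -ᵥ b₁ i) := by
        rw [vsub_eq_sub, vsub_eq_sub, hqp j, hqp i, smul_sub]
        abel
      have h1 := (b₁.coord i).linearMap_vsub (b₂ j) (b₂ i)
      rw [hsub, map_smul] at h1
      have h2 := (b₁.coord i).linearMap_vsub (b₁ j) (b₁ i)
      have h3 : b₁.coord i (b₁ j) = 0 := b₁.coord_apply_ne hij
      have h4 : b₁.coord i (b₁ i) = 1 := b₁.coord_apply_eq i
      rw [h2, vsub_eq_sub, h3, h4] at h1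
      have h1' : b₁.coord i (b₂ j) - b₁.coord i (b₂ i) = lam * (0 - 1) := by
        rw [← vsub_eq_sub, ← h1, smul_eq_mul]
      simp only [if_neg hij]
      simp only [hcc]
      linarith
  have key : ∀ i x, b₁.coord i x = lam * b₂.coord i x + cc i := by
    intro i x
    have hw : (Finset.univ.sum fun j => b₂.coord j x) = 1 := b₂.sum_coord_apply_eq_one x
    have hx := b₂.affineCombination_coord_eq_self x
    have hmap := Finset.univ.map_affineCombination ⇑b₂ (fun j => b₂.coord j x) hw (b₁.coord i)
    rw [hx] at hmap
    rw [hmap, Finset.affineCombination_eq_linear_combination Finset.univ _ _ hw]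
    simp only [Function.comp_apply, smul_eq_mul]
    have hterm : ∀ j, (b₂.coord j x) * (b₁.coord i (b₂ j))
        = lam * (if i = j then b₂.coord j x else 0) + cc i * b₂.coord j x := by
      intro j
      rw [hval i j]
      by_cases h : i = j <;> simp [h] <;> ring
    rw [Finset.sum_congr rfl fun j _ => hterm j, Finset.sum_add_distrib, ← Finset.mul_sum,
      ← Finset.mul_sum, Finset.sum_ite_eq, hw]
    simp
  -- sum of the constants
  have hsumc : cc 0 + cc 1 + cc 2 = 1 - lam := by
    have h1 : (Finset.univ.sum fun i => b₁.coord i a) = 1 := b₁.sum_coord_apply_eq_one a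
    have h2 : (Finset.univ.sum fun i => b₂.coord i a) = 1 := b₂.sum_coord_apply_eq_one a
    rw [Fin.sum_univ_three] at h1 h2
    have k0 := key 0 a
    have k1 := key 1 a
    have k2 := key 2 a
    linear_combination h1 - k0 - k1 - k2 - lam * h2
  -- helper to divide by lam
  have hstep : ∀ v w : ℝ, 0 ≤ w → lam * v = w → 0 ≤ v := by
    intro v w hw hvw
    have := div_nonneg hw hlam.le
    rwa [← hvw, mul_div_cancel_left₀ _ hlam.ne'] at this
  -- values of the first basis coords at the vertices a, b, c
  have hPA : ∀ i j : Fin 3, b₁.coord i (b₁ j) = if i = j then 1 else 0 := by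
    intro i j
    rcases eq_or_ne i j with rfl | hij
    · simp [b₁.coord_apply_eq i]
    · simp [hij, b₁.coord_apply_ne hij]
  -- the crossing point
  obtain ⟨x, hx1, hx2⟩ := hcross₁
  rw [hint₁] at hx1
  rw [hint₂] at hx2
  have hux : ∀ i, 0 < b₁.coord i x := hx1
  have hvx : ∀ i, 0 < b₂.coord i x := hx2
  have hgt : ∀ i, cc i < b₁.coord i x := by
    intro i
    have hk := key i x
    linarith [mul_pos hlam (hvx i)]
  have hxsum : b₁.coord 0 x + b₁.coord 1 x + b₁.coord 2 x = 1 := by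
    have := b₁.sum_coord_apply_eq_one x
    rwa [Fin.sum_univ_three] at this
  -- membership criteria for vertices
  have memv₁ : ∀ j : Fin 3, (∀ i, 0 ≤ (if i = j then (1:ℝ) else 0) - cc i) → b₁ j ∈ T₂ := by
    intro j h
    rw [hmem₂]
    intro i
    refine hstep _ ((if i = j then (1:ℝ) else 0) - cc i) ?_ ?_
    · exact h i
    · have := key i (b₁ j)
      rw [hPA i j] at this
      linarith
  have memv₂ : ∀ j : Fin 3, (∀ i, 0 ≤ lam * (if i = j then (1:ℝ) else 0) + cc i) → b₂ j ∈ T₁ := by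
    intro j h
    rw [hmem₁]
    intro i
    rw [hval i j]
    exact h i
  have ha' : b₁ 0 = a := rfl
  have hb' : b₁ 1 = b := rfl
  have hc' : b₁ 2 = c := rfl
  have hqa : b₂ 0 = lam • a + t := rfl
  have hqb : b₂ 1 = lam • b + t := rfl
  have hqc : b₂ 2 = lam • c + t := rfl
  rcases le_or_gt (cc 0) 0 with h0 | h0 <;>
    rcases le_or_gt (cc 1) 0 with h1 | h1 <;>
      rcases le_or_gt (cc 2) 0 with h2 | h2
  · -- all ≤ 0 : a ∈ T₂
    refine Or.inl (Or.inl ?_)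
    rw [← ha']
    exact memv₁ 0 (fun i => by fin_cases i <;> simp <;> linarith)
  · -- (≤,≤,>) : c ∈ T₂? No: τ₂>0; vertex c needs cc0≤0, cc1≤0, cc2≤1 : yes c ∈ T₂
    refine Or.inl (Or.inr (Or.inr ?_))
    rw [← hc']
    refine memv₁ 2 (fun i => by fin_cases i <;> simp <;> linarith [hgt 0, hgt 1, hgt 2, hux 0, hux 1, hux 2, hxsum])
  · -- (≤,>,≤) : b ∈ T₂
    refine Or.inl (Or.inr (Or.inl ?_))
    rw [← hb']
    refine memv₁ 1 (fun i => by fin_cases i <;> simp <;> linarith [hgt 0, hgt 1, hgt 2, hux 0, hux 1, hux 2, hxsum])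
  · -- (≤,>,>) : q0 ∈ T₁
    refine Or.inr (Or.inl ?_)
    rw [← hqa]
    refine memv₂ 0 (fun i => by fin_cases i <;> simp <;> linarith [hgt 0, hgt 1, hgt 2, hux 0, hux 1, hux 2, hxsum, hsumc])
  · -- (>,≤,≤) : a ∈ T₂
    refine Or.inl (Or.inl ?_)
    rw [← ha']
    refine memv₁ 0 (fun i => by fin_cases i <;> simp <;> linarith [hgt 0, hgt 1, hgt 2, hux 0, hux 1, hux 2, hxsum])
  · -- (>,≤,>) : q1 ∈ T₁
    refine Or.inr (Or.inr (Or.inl ?_))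
    rw [← hqb]
    refine memv₂ 1 (fun i => by fin_cases i <;> simp <;> linarith [hgt 0, hgt 1, hgt 2, hux 0, hux 1, hux 2, hxsum, hsumc])
  · -- (>,>,≤) : q2 ∈ T₁
    refine Or.inr (Or.inr (Or.inr ?_))
    rw [← hqc]
    refine memv₂ 2 (fun i => by fin_cases i <;> simp <;> linarith [hgt 0, hgt 1, hgt 2, hux 0, hux 1, hux 2, hxsum, hsumc])
  · -- (>,>,>) : q0 ∈ T₁
    refine Or.inr (Or.inl ?_)
    rw [← hqa]
    refine memv₂ 0 (fun i => by fin_cases i <;> simp <;> linarith [hgt 0, hgt 1, hgt 2, hux 0, hux 1, hux 2, hxsum, hsumc])
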